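/- Let ρ ∈ (0,1] and λ : ℕ → ℝ satisfy λ_ν ≤ 0 for all ν ≥ 1 and ∑_{ν=0}^∞ ρ^{-ν} λ_ν > 0 (with the series absolutely convergent). Suppose (p_t), (q_t) are sequences in ℝᵈ such that for all T ≥ 1 and all ν ≥ 1: ∑_{t=0}^{T-1} ⟨q_t, p_t⟩ ≥ 0 and ∑_{t=0}^{T-1} ⟨q_t, p_t - ρ^ν p_{t-ν}⟩ ≥ 0 (with p_s := 0 for s < 0). Then the filtered signal r_t := ∑_{ν=0}^{t} λ_ν p_{t-ν} satisfies ∑_{t=0}^{T-1} ⟨q_t, r_t⟩ ≥ 0 for all T ≥ 1. -/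

import Mathlib

open scoped RealInnerProductSpace

theorem filtered_dynamic_iqc
    (d : ℕ) (ρ : ℝ) (hρ0 : 0 < ρ) (hρ1 : ρ ≤ 1)
    (lam : ℕ → ℝ) (hlam : ∀ ν : ℕ, 1 ≤ ν → lam ν ≤ 0)
    (hsum : Summable (fun ν : ℕ => ρ⁻¹ ^ ν * |lam ν|))
    (hpos : 0 < ∑' ν : ℕ, ρ⁻¹ ^ ν * lam ν)
    (p q : ℕ → EuclideanSpace ℝ (Fin d))
    (hp0 : ∀ T : ℕ, 1 ≤ T → 0 ≤ ∑ t ∈ Finset.range T, ⟪q t, p t⟫)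
    (hpν : ∀ (T : ℕ), 1 ≤ T → ∀ ν : ℕ, 1 ≤ ν →
      0 ≤ ∑ t ∈ Finset.range T,
        ⟪q t, p t - ρ ^ ν • (if ν ≤ t then p (t - ν) else 0)⟫) :
    ∀ T : ℕ, 1 ≤ T →
      0 ≤ ∑ t ∈ Finset.range T,
        ⟪q t, ∑ ν ∈ Finset.range (t + 1), lam ν • p (t - ν)⟫ := by
  intro T hT
  set S : ℝ := ∑ t ∈ Finset.range T, ⟪q t, p t⟫ with hSdef
  have hS : 0 ≤ S := hp0 T hT
  set C : ℕ → ℕ → ℝ := fun ν t => if ν ≤ t then ⟪q t, p (t - ν)⟫ else 0 with hC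
  -- summability of the signed series
  have habs : Summable (fun ν : ℕ => |ρ⁻¹ ^ ν * lam ν|) := by
    convert hsum using 2 with ν
    rw [abs_mul, abs_of_nonneg (by positivity)]
  have hsummable : Summable (fun ν : ℕ => ρ⁻¹ ^ ν * lam ν) := habs.of_abs
  -- the partial sum dominates the full sum
  have htail : ∑' ν : ℕ, ρ⁻¹ ^ (ν + T) * lam (ν + T) ≤ 0 := by
    apply tsum_nonpos
    intro ν
    exact mul_nonpos_of_nonneg_of_nonpos (by positivity)
      (hlam _ (le_trans hT (Nat.le_add_left T ν)))
  have hsplit := Summable.sum_add_tsum_nat_add T hsummable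
  have hpartial : 0 < ∑ ν ∈ Finset.range T, ρ⁻¹ ^ ν * lam ν := by
    have := hsplit
    linarith [hpos, htail]
  -- key per-ν inequality
  have hB : ∀ ν ∈ Finset.range T,
      (ρ⁻¹ ^ ν * lam ν) * S ≤ lam ν * ∑ t ∈ Finset.range T, C ν t := by
    intro ν _
    rcases Nat.eq_zero_or_pos ν with rfl | hν
    · have : ∑ t ∈ Finset.range T, C 0 t = S := by
        apply Finset.sum_congr rfl
        intro t _
        simp [hC]
      rw [this]
      simp
    · have h1 := hpν T hT ν hν
      have hexp : ∑ t ∈ Finset.range T,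
          ⟪q t, p t - ρ ^ ν • (if ν ≤ t then p (t - ν) else 0)⟫
          = S - ρ ^ ν * ∑ t ∈ Finset.range T, C ν t := by
        rw [hSdef, Finset.mul_sum, ← Finset.sum_sub_distrib]
        apply Finset.sum_congr rfl
        intro t _
        rw [inner_sub_right, real_inner_smul_right]
        congr 1
        by_cases h : ν ≤ t <;> simp [hC, h]
      have hle : ρ ^ ν * ∑ t ∈ Finset.range T, C ν t ≤ S := by
        rw [hexp] at h1; linarith
      have hcoef : ρ⁻¹ ^ ν * lam ν ≤ 0 :=
        mul_nonpos_of_nonneg_of_nonpos (by positivity) (hlam ν hν)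
      have hρν : ρ⁻¹ ^ ν * ρ ^ ν = 1 := by
        rw [← mul_pow, inv_mul_cancel₀ hρ0.ne', one_pow]
      calc (ρ⁻¹ ^ ν * lam ν) * S
          ≤ (ρ⁻¹ ^ ν * lam ν) * (ρ ^ ν * ∑ t ∈ Finset.range T, C ν t) :=
            mul_le_mul_of_nonpos_left hle hcoef
        _ = lam ν * ∑ t ∈ Finset.range T, C ν t := by
            rw [mul_comm (ρ⁻¹ ^ ν) (lam ν), mul_assoc, ← mul_assoc (ρ⁻¹ ^ ν), hρν, one_mul]
  -- rewrite the goal as a sum over ν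
  have hgoal : ∑ t ∈ Finset.range T, ⟪q t, ∑ ν ∈ Finset.range (t + 1), lam ν • p (t - ν)⟫
      = ∑ ν ∈ Finset.range T, lam ν * ∑ t ∈ Finset.range T, C ν t := by
    have h1 : ∀ t ∈ Finset.range T,
        ⟪q t, ∑ ν ∈ Finset.range (t + 1), lam ν • p (t - ν)⟫
        = ∑ ν ∈ Finset.range T, lam ν * C ν t := by
      intro t ht
      rw [inner_sum]
      have hsub : Finset.range (t + 1) ⊆ Finset.range T :=
        Finset.range_subset_range.mpr (Finset.mem_range.mp ht)
      rw [show (∑ ν ∈ Finset.range (t + 1), ⟪q t, lam ν • p (t - ν)⟫)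
          = ∑ ν ∈ Finset.range (t + 1), lam ν * C ν t from
        Finset.sum_congr rfl (fun ν hν => by
          rw [real_inner_smul_right]
          congr 1
          simp [hC, Nat.lt_succ_iff.mp (Finset.mem_range.mp hν)])]
      exact Finset.sum_subset hsub (fun ν _ hν => by
        have : ¬ ν ≤ t := fun h => hν (Finset.mem_range.mpr (Nat.lt_succ_of_le h))
        simp [hC, this])
    rw [Finset.sum_congr rfl h1, Finset.sum_comm]
    apply Finset.sum_congr rfl
    intro ν _
    rw [Finset.mul_sum]
  rw [hgoal]
  calc (0 : ℝ) ≤ (∑ ν ∈ Finset.range T, ρ⁻¹ ^ ν * lam ν) * S :=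
        mul_nonneg hpartial.le hS
    _ = ∑ ν ∈ Finset.range T, (ρ⁻¹ ^ ν * lam ν) * S := by rw [Finset.sum_mul]
    _ ≤ ∑ ν ∈ Finset.range T, lam ν * ∑ t ∈ Finset.range T, C ν t :=
        Finset.sum_le_sum hB
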